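/- arXiv:2404.07666 — 6 statements merged into one kernel-verified Lean document; each statement's English description precedes it below -/
import Mathlib

section
/- For all real x ≥ 1, we have 1 + x·ln(x/(1+x)) < 1/(2(x+0.5)). -/
lemma aux_log_lb (t : ℝ) (ht : 0 < t) : 2 * t / (2 + t) < Real.log (1 + t) := by
  set f : ℝ → ℝ := fun s => Real.log (1 + s) - 2 * s / (2 + s) with hf
  have hder : ∀ s : ℝ, -1 < s → HasDerivAt f (1 / (1 + s) - 4 / (2 + s) ^ 2) s := by
    intro s hs
    have h1 : (1 : ℝ) + s ≠ 0 := by linarith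
    have h2 : (2 : ℝ) + s ≠ 0 := by linarith
    have hlog : HasDerivAt (fun u : ℝ => Real.log (1 + u)) (1 / (1 + s)) s := by
      have := (Real.hasDerivAt_log h1).comp s ((hasDerivAt_id s).const_add 1)
      simpa [one_div, Function.comp_def] using this
    have hdiv : HasDerivAt (fun u : ℝ => 2 * u / (2 + u)) (4 / (2 + s) ^ 2) s := by
      have := ((hasDerivAt_id s).const_mul 2).div ((hasDerivAt_id s).const_add 2) h2
      convert this using 1
      · rfl
      · rfl
      · rfl
      simp only [id]; field_simp
      ring
    exact hlog.sub hdiv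
  have hmono : StrictMonoOn f (Set.Ici (0 : ℝ)) := by
    apply strictMonoOn_of_deriv_pos (convex_Ici 0)
    · intro s hs
      exact (hder s (by simp at hs; linarith)).continuousAt.continuousWithinAt
    · intro s hs
      rw [interior_Ici] at hs
      have hs' : (0 : ℝ) < s := hs
      rw [(hder s (by linarith)).deriv]
      have h1 : (0 : ℝ) < 1 + s := by linarith
      have h2 : (0 : ℝ) < 2 + s := by linarith
      have : 1 / (1 + s) - 4 / (2 + s) ^ 2 = s ^ 2 / ((1 + s) * (2 + s) ^ 2) := by
        field_simp
        ring
      rw [this]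
      positivity
  have h0 : f 0 = 0 := by simp [hf]
  have := hmono (Set.self_mem_Ici) (Set.mem_Ici.mpr ht.le) ht
  rw [h0] at this
  simpa [hf, sub_pos] using this

theorem stmt_0 (x : ℝ) (hx : 1 ≤ x) :
    1 + x * Real.log (x / (1 + x)) < 1 / (2 * (x + 0.5)) := by
  have hx0 : (0 : ℝ) < x := by linarith
  have h1x : (0 : ℝ) < 1 + x := by linarith
  have hlog : Real.log (x / (1 + x)) = -Real.log (1 + 1 / x) := by
    rw [show x / (1 + x) = (1 + 1 / x)⁻¹ by field_simp; ring, Real.log_inv]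
  have hkey := aux_log_lb (1 / x) (by positivity)
  have h2x : (0 : ℝ) < 2 * x + 1 := by linarith
  have hval : 2 * (1 / x) / (2 + 1 / x) = 2 / (2 * x + 1) := by
    field_simp
  rw [hval] at hkey
  have hmul : x * (2 / (2 * x + 1)) < x * Real.log (1 + 1 / x) :=
    (mul_lt_mul_iff_right₀ hx0).mpr hkey
  rw [hlog]
  have : 1 / (2 * (x + 0.5)) = 1 - x * (2 / (2 * x + 1)) := by
    field_simp
    ring
  rw [this]
  linarith
end

section
/- For all real t > 1, t + (t³ − t)·ln(1 − 1/t²) > 1/(2t). -/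
lemma aux_log_lt (y : ℝ) (hy : 1 < y) : Real.log y < (y - 1 / y) / 2 := by
  have h : StrictMonoOn (fun x : ℝ => (x - 1 / x) / 2 - Real.log x) (Set.Ici 1) := by
    apply strictMonoOn_of_deriv_pos (convex_Ici 1)
    · apply ContinuousOn.sub
      · apply ContinuousOn.div_const
        apply ContinuousOn.sub continuousOn_id
        exact continuousOn_const.div continuousOn_id (fun x hx => by
          have : (1:ℝ) ≤ x := hx; linarith)
      · apply Real.continuousOn_log.mono
        intro x hx
        have : (1:ℝ) ≤ x := hx
        simp; linarith
    · intro x hx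
      rw [interior_Ici] at hx
      have hx1 : (1:ℝ) < x := hx
      have hx0 : (0:ℝ) < x := by linarith
      have hd : HasDerivAt (fun x : ℝ => (x - 1 / x) / 2 - Real.log x)
          ((1 - (-1 / x ^ 2)) / 2 - 1 / x) x := by
        have h1 : HasDerivAt (fun x : ℝ => 1 / x) (-1 / x ^ 2) x := by
          simpa [one_div, neg_div] using (hasDerivAt_inv (ne_of_gt hx0))
        have h2 : HasDerivAt (fun x : ℝ => (x - 1 / x) / 2) ((1 - (-1 / x ^ 2)) / 2) x :=
          ((hasDerivAt_id x).sub h1).div_const 2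
        simpa [one_div, Pi.sub_def] using h2.sub (Real.hasDerivAt_log (ne_of_gt hx0))
      rw [hd.deriv]
      rw [div_sub_div _ _ (by norm_num : (2:ℝ) ≠ 0) (ne_of_gt hx0)]
      apply div_pos
      · have : (1 - -1 / x ^ 2) * x - 2 * 1 = (x - 1) ^ 2 / x := by field_simp; ring
        rw [this]
        exact div_pos (by nlinarith) hx0
      · positivity
  have := h (Set.self_mem_Ici) (Set.mem_Ici.mpr hy.le) hy
  simp only [Real.log_one] at this
  simp only [one_div] at this ⊢
  norm_num at this
  linarith

theorem stmt_4 (t : ℝ) (ht : 1 < t) :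
    t + (t ^ 3 - t) * Real.log (1 - 1 / t ^ 2) > 1 / (2 * t) := by
  have ht0 : (0:ℝ) < t := by linarith
  have ht2 : (1:ℝ) < t ^ 2 := by nlinarith
  have hxpos : (0:ℝ) < 1 - 1 / t ^ 2 := by
    have : 1 / t ^ 2 < 1 := by
      rw [div_lt_one (by positivity)]; exact ht2
    linarith
  set y : ℝ := t ^ 2 / (t ^ 2 - 1) with hy
  have hy1 : 1 < y := by
    rw [hy, lt_div_iff₀ (by linarith)]; linarith
  have hlog : Real.log (1 - 1 / t ^ 2) = - Real.log y := by
    rw [hy, ← Real.log_inv]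
    congr 1
    field_simp
  have hb := aux_log_lt y hy1
  have hcoef : (0:ℝ) < t ^ 3 - t := by nlinarith
  have hmul : (t ^ 3 - t) * Real.log (1 - 1 / t ^ 2) >
      (t ^ 3 - t) * (-(y - 1 / y) / 2) := by
    rw [hlog]
    apply mul_lt_mul_of_pos_left _ hcoef
    rw [neg_div, neg_lt_neg_iff]
    exact hb
  have hid : t + (t ^ 3 - t) * (-(y - 1 / y) / 2) = 1 / (2 * t) := by
    rw [hy]
    have h1 : t ^ 2 - 1 ≠ 0 := by nlinarith
    field_simp
    ring
  linarith
end

section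
/- Let F be holomorphic on the unit disk D with F(z) = Σ_{n≥0} a_n z^n and |F(z)| ≤ 1 for all z ∈ D. Then |a_n| ≤ 1 − |a_0|² for every n ≥ 1. -/
open Metric Complex
open scoped ENNReal NNReal

lemma coeff_one_bound (g : ℂ → ℂ) (q : FormalMultilinearSeries ℂ ℂ ℂ)
    (hg : HasFPowerSeriesOnBall g q 0 1)
    (hbd : ∀ w ∈ ball (0 : ℂ) 1, ‖g w‖ ≤ 1) :
    ‖q.coeff 1‖ ≤ 1 - ‖q.coeff 0‖ ^ 2 := by
  have hball : Metric.eball (0 : ℂ) (1 : ℝ≥0∞) = ball (0 : ℂ) 1 := by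
    simpa using Metric.emetric_ball_nnreal (x := (0:ℂ)) (ε := 1)
  have hdiff : DifferentiableOn ℂ g (ball (0 : ℂ) 1) := by
    have := hg.differentiableOn
    rwa [hball] at this
  have h0mem : (0 : ℂ) ∈ ball (0 : ℂ) 1 := mem_ball_self one_pos
  have hq0 : q.coeff 0 = g 0 := hg.coeff_zero _
  have hderiv : deriv g 0 = q.coeff 1 := hg.hasFPowerSeriesAt.deriv
  set b0 : ℂ := g 0 with hb0
  have hb0le : ‖b0‖ ≤ 1 := hbd 0 h0mem
  rcases eq_or_lt_of_le hb0le with hb0eq | hb0lt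
  -- case |b0| = 1 : g is constant by max modulus
  · have hmax : IsMaxOn (norm ∘ g) (ball (0:ℂ) 1) 0 := by
      intro w hw
      simp only [Function.comp_apply, Set.mem_setOf_eq]
      rw [← hb0, hb0eq]
      exact hbd w hw
    have hconst := Complex.eqOn_of_isPreconnected_of_isMaxOn_norm
      (convex_ball (0:ℂ) 1).isPreconnected isOpen_ball hdiff h0mem hmax
    have hev : g =ᶠ[nhds (0:ℂ)] (fun _ => g 0) := by
      filter_upwards [isOpen_ball.mem_nhds h0mem] with w hw
      exact hconst hw
    have : deriv g 0 = 0 := by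
      rw [hev.deriv_eq]
      simp
    rw [← hderiv, this]
    simp only [norm_zero]
    rw [hq0, hb0eq]
    norm_num
  -- case |b0| < 1
  · set d : ℂ := q.coeff 1 with hd
    have hgd : HasDerivAt g d 0 := hg.hasFPowerSeriesAt.hasDerivAt
    set c : ℂ := (starRingEnd ℂ) b0 with hc
    have hcb0 : ‖c * b0‖ < 1 := by
      rw [norm_mul, Complex.norm_conj]
      nlinarith [norm_nonneg b0]
    have hden : ∀ w ∈ ball (0:ℂ) 1, 1 - c * g w ≠ 0 := by
      intro w hw
      have h1 : ‖c * g w‖ < 1 := by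
        rw [norm_mul, Complex.norm_conj]
        calc ‖b0‖ * ‖g w‖ ≤ ‖b0‖ * 1 :=
              mul_le_mul_of_nonneg_left (hbd w hw) (norm_nonneg b0)
          _ < 1 := by simpa using hb0lt
      intro hcon
      have : c * g w = 1 := by linear_combination -hcon
      rw [this] at h1
      simp at h1
    set M : ℂ → ℂ := fun z => (b0 - g z) / (1 - c * g z) with hM
    have hMdiff : DifferentiableOn ℂ M (ball (0:ℂ) 1) := by
      apply DifferentiableOn.div
      · exact (differentiableOn_const _).sub hdiff
      · exact (differentiableOn_const _).sub ((differentiableOn_const _).mul hdiff)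
      · exact hden
    have hM0 : M 0 = 0 := by
      simp [hM, ← hb0]
    have hMle : ∀ w ∈ ball (0:ℂ) 1, ‖M w‖ ≤ 1 := by
      intro w hw
      have hgw : ‖g w‖ ≤ 1 := hbd w hw
      have hkey : Complex.normSq (b0 - g w) ≤ Complex.normSq (1 - c * g w) := by
        have hexp : Complex.normSq (1 - c * g w) - Complex.normSq (b0 - g w)
            = (1 - Complex.normSq b0) * (1 - Complex.normSq (g w)) := by
          simp only [Complex.normSq_apply, hc, Complex.sub_re, Complex.sub_im,
            Complex.mul_re, Complex.mul_im, Complex.one_re, Complex.one_im,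
            Complex.conj_re, Complex.conj_im]
          ring
        have h1 : Complex.normSq b0 ≤ 1 := by
          rw [← Complex.sq_norm]; nlinarith [norm_nonneg b0]
        have h2 : Complex.normSq (g w) ≤ 1 := by
          rw [← Complex.sq_norm]; nlinarith [norm_nonneg (g w)]
        nlinarith [hexp]
      have habs : ‖b0 - g w‖ ≤ ‖1 - c * g w‖ := by
        rw [Complex.norm_def, Complex.norm_def]
        exact Real.sqrt_le_sqrt hkey
      rw [hM]
      simp only [norm_div]
      rcases eq_or_ne (1 - c * g w) 0 with h | h
      · simp [h]
      · rw [div_le_one (norm_pos_iff.mpr h)]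
        exact habs
    -- derivative of M at 0
    have hN : HasDerivAt (fun z => b0 - g z) (-d) 0 := by
      simpa using hgd.const_sub b0
    have hD : HasDerivAt (fun z => 1 - c * g z) (-(c * d)) 0 := by
      simpa using (hgd.const_mul c).const_sub (1:ℂ)
    have hD0ne : (1 : ℂ) - c * g 0 ≠ 0 := hden 0 h0mem
    have hb0ne : (1 : ℂ) - c * b0 ≠ 0 := by rw [hb0]; exact hD0ne
    have hMd : HasDerivAt M
        ((-d * (1 - c * g 0) - (b0 - g 0) * (-(c * d))) / ((1 - c * g 0) ^ 2)) 0 :=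
      hN.div hD hD0ne
    have hsimp : (-d * (1 - c * g 0) - (b0 - g 0) * (-(c * d))) / ((1 - c * g 0) ^ 2)
        = -d / (1 - c * b0) := by
      rw [← hb0, sub_self, zero_mul, sub_zero]
      field_simp
    have hderivM : deriv M 0 = -d / (1 - c * b0) := by rw [hMd.deriv, hsimp]
    have hSch : ∀ ε : ℝ, 0 < ε → ‖deriv M 0‖ ≤ 1 + ε := by
      intro ε hε
      have hmaps : Set.MapsTo M (ball (0:ℂ) 1) (ball (M 0) (1 + ε)) := by
        intro w hw
        rw [hM0, mem_ball_zero_iff]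
        calc ‖M w‖ ≤ 1 := hMle w hw
          _ < 1 + ε := by linarith
      have := Complex.norm_deriv_le_div_of_mapsTo_ball hMdiff (hmaps.mono_right ball_subset_closedBall) one_pos
      simpa using this
    have hderivMle : ‖deriv M 0‖ ≤ 1 := by
      refine le_of_forall_pos_le_add fun ε hε => ?_
      linarith [hSch ε hε]
    have hpos : 0 < 1 - ‖b0‖ ^ 2 := by
      nlinarith [norm_nonneg b0]
    have habs1 : ‖1 - c * b0‖ = 1 - ‖b0‖ ^ 2 := by
      have hcb : c * b0 = (Complex.normSq b0 : ℂ) := by rw [hc, mul_comm, Complex.mul_conj]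
      rw [hcb, ← Complex.ofReal_one, ← Complex.ofReal_sub, Complex.norm_real, Real.norm_eq_abs]
      rw [_root_.abs_of_nonneg (by rw [← Complex.sq_norm]; linarith : (0:ℝ) ≤ 1 - Complex.normSq b0)]
      rw [← Complex.sq_norm]
    rw [hderivM, norm_div, habs1, norm_neg] at hderivMle
    rw [hq0]
    exact (div_le_one hpos).1 hderivMle


lemma radius_ge_one (c : ℕ → ℂ)
    (hb : ∀ s : ℝ, 0 ≤ s → s < 1 → ∃ C, ∀ m, ‖c m‖ * s ^ m ≤ C) :
    1 ≤ (FormalMultilinearSeries.ofScalars ℂ c).radius := by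
  apply ENNReal.le_of_forall_nnreal_lt
  intro r hr
  have hr1 : (r : ℝ) < 1 := by exact_mod_cast hr
  obtain ⟨C, hC⟩ := hb r r.coe_nonneg hr1
  apply FormalMultilinearSeries.le_radius_of_bound _ C
  intro m
  have hnorm : ‖FormalMultilinearSeries.ofScalars ℂ c m‖ ≤ ‖c m‖ := by
    rw [FormalMultilinearSeries.ofScalars_norm]
  calc ‖FormalMultilinearSeries.ofScalars ℂ c m‖ * (r : ℝ) ^ m
      ≤ ‖c m‖ * (r : ℝ) ^ m := by
        apply mul_le_mul_of_nonneg_right hnorm (by positivity)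
    _ ≤ C := hC m

theorem stmt_8 (F : ℂ → ℂ) (a : ℕ → ℂ)
    (hF : DifferentiableOn ℂ F (ball (0 : ℂ) 1))
    (hsum : ∀ z ∈ ball (0 : ℂ) 1, HasSum (fun n : ℕ => a n * z ^ n) (F z))
    (hbd : ∀ z ∈ ball (0 : ℂ) 1, ‖F z‖ ≤ 1) :
    ∀ n : ℕ, 1 ≤ n → ‖a n‖ ≤ 1 - (‖a 0‖) ^ 2 := by
  intro n hn
  have hn0 : n ≠ 0 := by omega
  have hnpos : 0 < n := Nat.pos_of_ne_zero hn0
  -- boundedness of coefficients against any s < 1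
  have hbdd : ∀ s : ℝ, 0 ≤ s → s < 1 → ∃ C, ∀ m, ‖a m‖ * s ^ m ≤ C := by
    intro s hs0 hs1
    have hz : (s : ℂ) ∈ ball (0 : ℂ) 1 := by
      rw [mem_ball_zero_iff, Complex.norm_real, Real.norm_eq_abs]
      rwa [_root_.abs_of_nonneg hs0]
    have h0 : Filter.Tendsto (fun m => ‖a m * (s : ℂ) ^ m‖) Filter.atTop (nhds 0) := by
      simpa using ((hsum _ hz).summable.tendsto_atTop_zero).norm
    obtain ⟨C, hC⟩ := h0.bddAbove_range
    refine ⟨C, fun m => ?_⟩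
    have hmem := hC (Set.mem_range_self m)
    calc ‖a m‖ * s ^ m = ‖a m * (s : ℂ) ^ m‖ := by
          rw [norm_mul, norm_pow,
            Complex.norm_real, Real.norm_eq_abs, _root_.abs_of_nonneg hs0]
      _ ≤ C := hmem
  set b : ℕ → ℂ := fun k => a (n * k) with hbdef
  set q := FormalMultilinearSeries.ofScalars ℂ b with hqdef
  have hqr : 1 ≤ q.radius := by
    apply radius_ge_one
    intro s hs0 hs1
    set t : ℝ := s ^ (1 / (n : ℝ)) with htdef
    have ht0 : 0 ≤ t := Real.rpow_nonneg hs0 _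
    have ht1 : t < 1 := Real.rpow_lt_one hs0 hs1 (by positivity)
    obtain ⟨C, hC⟩ := hbdd t ht0 ht1
    refine ⟨C, fun k => ?_⟩
    have hts : t ^ (n * k) = s ^ k := by
      rw [← Real.rpow_natCast t (n * k), htdef, ← Real.rpow_mul hs0, ← Real.rpow_natCast s k]
      congr 1
      push_cast
      field_simp
    calc ‖b k‖ * s ^ k = ‖a (n * k)‖ * t ^ (n * k) := by
          rw [hts]
      _ ≤ C := hC (n * k)
  have hg : HasFPowerSeriesOnBall q.sum q 0 1 :=
    (q.hasFPowerSeriesOnBall (lt_of_lt_of_le one_pos hqr)).mono one_pos hqr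
  set g := q.sum with hgdef
  have hball : Metric.eball (0 : ℂ) (1 : ℝ≥0∞) = ball (0 : ℂ) 1 := by
    simpa using Metric.emetric_ball_nnreal (x := (0:ℂ)) (ε := 1)
  have hgbd : ∀ w ∈ ball (0 : ℂ) 1, ‖g w‖ ≤ 1 := by
    intro w hw
    obtain ⟨z, hzn⟩ := IsAlgClosed.exists_pow_nat_eq w hnpos
    have hwabs : ‖w‖ < 1 := by
      rwa [mem_ball_zero_iff] at hw
    have hz1 : ‖z‖ < 1 := by
      by_contra hcon
      push_neg at hcon
      have h1 : (1 : ℝ) ≤ ‖z‖ ^ n := one_le_pow₀ hcon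
      rw [← hzn, norm_pow] at hwabs
      linarith
    have hζ : IsPrimitiveRoot (Complex.exp (2 * Real.pi * Complex.I / n)) n :=
      Complex.isPrimitiveRoot_exp n hn0
    set ζ : ℂ := Complex.exp (2 * Real.pi * Complex.I / n) with hζdef
    have hζabs : ‖ζ‖ = 1 := by
      have h1 : ‖ζ‖ ^ n = 1 := by
        rw [← norm_pow, hζ.pow_eq_one]
        simp
      have h2 : 0 ≤ ‖ζ‖ := norm_nonneg ζ
      rcases lt_trichotomy (‖ζ‖) 1 with h | h | h
      · exfalso
        have := pow_lt_one₀ h2 h hn0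
        linarith
      · exact h
      · exfalso
        have := one_lt_pow₀ h hn0
        linarith
    have hmem : ∀ j : ℕ, ζ ^ j * z ∈ ball (0 : ℂ) 1 := by
      intro j
      rw [mem_ball_zero_iff, norm_mul, norm_pow, hζabs, one_pow, one_mul]
      exact hz1
    have hsum1 : ∀ j : ℕ, HasSum (fun m => (ζ ^ m) ^ j * (a m * z ^ m)) (F (ζ ^ j * z)) := by
      intro j
      refine (hsum _ (hmem j)).congr_fun fun m => ?_
      rw [mul_pow, ← pow_mul, ← pow_mul, mul_comm j m]
      ring
    have hsum2 : HasSum (fun m => (∑ j ∈ Finset.range n, (ζ ^ m) ^ j) * (a m * z ^ m))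
        (∑ j ∈ Finset.range n, F (ζ ^ j * z)) := by
      refine (hasSum_sum fun j _ => hsum1 j).congr_fun fun m => ?_
      rw [Finset.sum_mul]
    have hcoef : ∀ m : ℕ, (∑ j ∈ Finset.range n, (ζ ^ m) ^ j) = if n ∣ m then (n : ℂ) else 0 := by
      intro m
      by_cases hd : n ∣ m
      · rw [if_pos hd, (hζ.pow_eq_one_iff_dvd m).2 hd]
        simp
      · rw [if_neg hd]
        have hne : ζ ^ m ≠ 1 := fun hc => hd ((hζ.pow_eq_one_iff_dvd m).1 hc)
        rw [geom_sum_eq hne]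
        have hzero : (ζ ^ m) ^ n - 1 = 0 := by
          rw [← pow_mul, mul_comm m n, pow_mul, hζ.pow_eq_one, one_pow, sub_self]
        rw [hzero, zero_div]
    have hsum3 : HasSum (fun m => if n ∣ m then (n : ℂ) * (a m * z ^ m) else 0)
        (∑ j ∈ Finset.range n, F (ζ ^ j * z)) := by
      refine hsum2.congr_fun fun m => ?_
      rw [hcoef m]
      split_ifs <;> simp
    have hznball : z ^ n ∈ ball (0 : ℂ) 1 := by
      rw [mem_ball_zero_iff, norm_pow]
      exact pow_lt_one₀ (norm_nonneg z) hz1 hn0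
    have hsum4 : HasSum (fun k => (n : ℂ) * (b k * (z ^ n) ^ k)) ((n : ℂ) * g (z ^ n)) := by
      have h := hg.hasSum (y := z ^ n) (by rw [hball]; exact hznball)
      rw [zero_add] at h
      refine HasSum.mul_left _ (h.congr_fun fun k => ?_)
      rw [hqdef, FormalMultilinearSeries.ofScalars_apply_eq, smul_eq_mul]
    have hinj : Function.Injective (fun k : ℕ => n * k) := fun x y h =>
      Nat.eq_of_mul_eq_mul_left hnpos h
    have hvanish : ∀ m ∉ Set.range (fun k : ℕ => n * k),
        (if n ∣ m then (n : ℂ) * (a m * z ^ m) else 0) = 0 := by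
      intro m hm
      rw [if_neg]
      rintro ⟨k, hk⟩
      exact hm ⟨k, hk.symm⟩
    have hsum5 : HasSum (fun m => if n ∣ m then (n : ℂ) * (a m * z ^ m) else 0)
        ((n : ℂ) * g (z ^ n)) := by
      rw [← hinj.hasSum_iff hvanish]
      refine hsum4.congr_fun fun k => ?_
      show (if n ∣ n * k then (n : ℂ) * (a (n * k) * z ^ (n * k)) else 0) = _
      rw [if_pos ⟨k, rfl⟩, pow_mul]
    have hkey : (n : ℂ) * g (z ^ n) = ∑ j ∈ Finset.range n, F (ζ ^ j * z) :=
      hsum5.unique hsum3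
    have habs : (n : ℝ) * ‖g (z ^ n)‖ ≤ n := by
      have h1 : ‖(n : ℂ) * g (z ^ n)‖ ≤ n := by
        rw [hkey]
        calc ‖∑ j ∈ Finset.range n, F (ζ ^ j * z)‖
            ≤ ∑ j ∈ Finset.range n, ‖F (ζ ^ j * z)‖ :=
              norm_sum_le _ _
          _ ≤ ∑ _j ∈ Finset.range n, (1 : ℝ) :=
              Finset.sum_le_sum fun j _ => hbd _ (hmem j)
          _ = n := by simp
      rwa [norm_mul, Complex.norm_natCast] at h1
    have hnR : (0 : ℝ) < n := by exact_mod_cast hnpos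
    rw [← hzn]
    nlinarith [norm_nonneg (g (z ^ n))]
  have key := coeff_one_bound g q hg hgbd
  have hcoeff : ∀ k, q.coeff k = b k := by
    intro k
    rw [hqdef]
    show (FormalMultilinearSeries.ofScalars ℂ b) k (fun _ => 1) = b k
    rw [FormalMultilinearSeries.ofScalars_apply_eq, one_pow, smul_eq_mul, mul_one]
  rw [hcoeff 1, hcoeff 0] at key
  simpa [hbdef] using key
end

section
/- Let h(z) = Σ_{n≥1} a_n z^n and g(z) = Σ_{n≥1} b_n z^n be holomorphic on the unit disk D. Suppose ||a_1| − |b_1|| ≥ 1 and |h'(z)| + |g'(z)| ≤ Λ for all z ∈ D with Λ ≥ 1. Then for each n ≥ 2, |a_n| + |b_n| ≤ (Λ² − 1)/(nΛ). -/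
open Metric Complex FormalMultilinearSeries
set_option maxHeartbeats 1000000

noncomputable def Complex.abs : AbsoluteValue ℂ ℝ := IsAbsoluteValue.toAbsoluteValue (norm : ℂ → ℝ)

theorem Complex.norm_eq_abs (z : ℂ) : ‖z‖ = Complex.abs z := rfl

theorem Complex.abs_apply (z : ℂ) : Complex.abs z = Real.sqrt (normSq z) := Complex.norm_def z

theorem Complex.abs_conj (z : ℂ) : Complex.abs (starRingEnd ℂ z) = Complex.abs z := Complex.norm_conj z

theorem Complex.abs_ofReal (x : ℝ) : Complex.abs (x : ℂ) = |x| := Complex.norm_real x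

theorem Complex.abs_natCast (n : ℕ) : Complex.abs (n : ℂ) = n := Complex.norm_natCast n

theorem Complex.sq_abs (z : ℂ) : Complex.abs z ^ 2 = normSq z := Complex.sq_norm z

theorem Complex.normSq_eq_abs (z : ℂ) : normSq z = Complex.abs z ^ 2 := Complex.normSq_eq_norm_sq z

theorem Complex.abs_exp_ofReal_mul_I (x : ℝ) : Complex.abs (Complex.exp (x * Complex.I)) = 1 :=
  Complex.norm_exp_ofReal_mul_I x

theorem Complex.abs_deriv_le_div_of_mapsTo_ball {f : ℂ → ℂ} {c : ℂ} {R₁ R₂ : ℝ}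
    (hd : DifferentiableOn ℂ f (ball c R₁)) (h_maps : Set.MapsTo f (ball c R₁) (ball (f c) R₂))
    (h₀ : 0 < R₁) : Complex.abs (deriv f c) ≤ R₂ / R₁ :=
  Complex.norm_deriv_le_div_of_mapsTo_ball hd (h_maps.mono_right ball_subset_closedBall) h₀

lemma myOfScalars_coeff (c : ℕ → ℂ) (n : ℕ) : (ofScalars ℂ c).coeff n = c n := by
  show (ofScalars ℂ c) n (fun _ => (1:ℂ)) = c n
  rw [ofScalars_apply_eq]; simp

lemma emetric_ball_one : Metric.eball (0:ℂ) (1:ENNReal) = Metric.ball (0:ℂ) 1 := by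
  simpa using Metric.emetric_ball_nnreal (x := (0:ℂ)) (ε := 1)

lemma myHasFPS (c : ℕ → ℂ) (f : ℂ → ℂ)
    (hs : ∀ z ∈ Metric.ball (0:ℂ) 1, HasSum (fun k => c k * z ^ k) (f z)) :
    HasFPowerSeriesOnBall f (ofScalars ℂ c) 0 1 := by
  have hrad : 1 ≤ (ofScalars ℂ c).radius := by
    refine ENNReal.le_of_forall_nnreal_lt fun r hr => ?_
    have hr1 : (r:ℝ) < 1 := by exact_mod_cast hr
    have hz : ((r:ℝ):ℂ) ∈ Metric.ball (0:ℂ) 1 := by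
      simp only [mem_ball, dist_zero_right, Complex.norm_real, Real.norm_eq_abs]
      rwa [_root_.abs_of_nonneg r.coe_nonneg]
    have h0 := tendsto_zero_iff_norm_tendsto_zero.mp (hs _ hz).summable.tendsto_atTop_zero
    refine le_radius_of_tendsto _ (l := 0) (h0.congr fun n => ?_)
    rw [ofScalars_norm, norm_mul, norm_pow, Complex.norm_real, Real.norm_eq_abs,
      _root_.abs_of_nonneg r.coe_nonneg]
  have h2 := ((ofScalars ℂ c).hasFPowerSeriesOnBall
    (lt_of_lt_of_le one_pos hrad)).mono one_pos hrad
  refine h2.congr ?_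
  intro z hz
  rw [emetric_ball_one] at hz
  rw [← (hs z hz).tsum_eq]
  exact tsum_congr fun n => by
    rw [FormalMultilinearSeries.apply_eq_pow_smul_coeff, myOfScalars_coeff, smul_eq_mul, mul_comm]


lemma schwarz_pick_coeff_one (f : ℂ → ℂ) (q : FormalMultilinearSeries ℂ ℂ ℂ)
    (hq : HasFPowerSeriesOnBall f q 0 1)
    (hb : ∀ z ∈ Metric.ball (0:ℂ) 1, Complex.abs (f z) ≤ 1) :
    Complex.abs (q.coeff 1) ≤ 1 - Complex.abs (q.coeff 0) ^ 2 := by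
  have fdiff : DifferentiableOn ℂ f (Metric.ball (0:ℂ) 1) := by
    have := hq.differentiableOn
    rwa [emetric_ball_one] at this
  have h0mem : (0:ℂ) ∈ Metric.ball (0:ℂ) 1 := mem_ball_self one_pos
  have f0 : q.coeff 0 = f 0 := hq.coeff_zero _
  have d1 : deriv f 0 = q.coeff 1 := hq.hasFPowerSeriesAt.deriv
  by_cases habs : Complex.abs (f 0) = 1
  · -- maximum modulus: f is constant, so coeff 1 = 0
    have hmax : IsMaxOn (norm ∘ f) (Metric.ball (0:ℂ) 1) 0 := by
      intro z hz
      simp only [Function.comp_apply, Complex.norm_eq_abs, habs]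
      exact hb z hz
    have hconst := Complex.eqOn_of_isPreconnected_of_isMaxOn_norm
      (convex_ball (0:ℂ) 1).isPreconnected isOpen_ball fdiff h0mem hmax
    have : deriv f 0 = 0 := by
      have hev : f =ᶠ[nhds (0:ℂ)] fun _ => f 0 := by
        filter_upwards [isOpen_ball.mem_nhds h0mem] with z hz using hconst hz
      rw [hev.deriv_eq, deriv_const]
    rw [← d1, this, f0, habs]
    simp
  · have h0lt : Complex.abs (f 0) < 1 := lt_of_le_of_ne (hb 0 h0mem) habs
    set κ : ℂ := starRingEnd ℂ (f 0) with hκ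
    have hDne : ∀ z ∈ Metric.ball (0:ℂ) 1, 1 - κ * f z ≠ 0 := by
      intro z hz he
      have h1 : Complex.abs (κ * f z) < 1 := by
        rw [map_mul, hκ, Complex.abs_conj]
        calc Complex.abs (f 0) * Complex.abs (f z) ≤ Complex.abs (f 0) * 1 :=
          mul_le_mul_of_nonneg_left (hb z hz) (Complex.abs.nonneg _)
        _ < 1 := by rw [mul_one]; exact h0lt
      have : κ * f z = 1 := by linear_combination -he
      rw [this] at h1; simp at h1
    set g : ℂ → ℂ := fun z => (f z - f 0) * (1 - κ * f z)⁻¹ with hg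
    have gdiff : DifferentiableOn ℂ g (Metric.ball (0:ℂ) 1) := by
      apply (fdiff.sub_const _).mul
      exact ((differentiableOn_const _).sub (fdiff.const_mul κ)).inv hDne
    have g0 : g 0 = 0 := by simp [hg]
    -- key modulus bound
    have hgle : ∀ z ∈ Metric.ball (0:ℂ) 1, Complex.abs (g z) ≤ 1 := by
      intro z hz
      have hw : Complex.abs (f z) ≤ 1 := hb z hz
      have hid : normSq (1 - κ * f z) - normSq (f z - f 0)
          = (1 - normSq (f z)) * (1 - normSq (f 0)) := by
        have : ((normSq (1 - κ * f z) : ℂ)) - (normSq (f z - f 0) : ℂ)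
            = (1 - (normSq (f z) : ℂ)) * (1 - (normSq (f 0) : ℂ)) := by
          rw [← Complex.mul_conj, ← Complex.mul_conj, ← Complex.mul_conj, ← Complex.mul_conj]
          simp only [map_sub, map_mul, map_one, hκ, Complex.conj_conj]
          ring
        exact_mod_cast this
    -- deduce abs bound
      have hz1 : normSq (f z) ≤ 1 := by
        rw [← Complex.sq_abs]; nlinarith [Complex.abs.nonneg (f z)]
      have hz0 : normSq (f 0) ≤ 1 := by
        rw [← Complex.sq_abs]; nlinarith [Complex.abs.nonneg (f 0)]
      have hnum : normSq (f z - f 0) ≤ normSq (1 - κ * f z) := by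
        nlinarith [mul_nonneg (sub_nonneg.mpr hz1) (sub_nonneg.mpr hz0)]
      have hden : Complex.abs (1 - κ * f z) ≠ 0 := Complex.abs.ne_zero (hDne z hz)
      rw [hg]
      simp only [map_mul, map_inv₀]
      rw [mul_inv_le_iff₀ (lt_of_le_of_ne (Complex.abs.nonneg _) (Ne.symm hden)), one_mul]
      rw [Complex.abs_apply, Complex.abs_apply]
      exact Real.sqrt_le_sqrt hnum
    -- Schwarz lemma: |deriv g 0| ≤ 1
    have hgd : Complex.abs (deriv g 0) ≤ 1 := by
      refine le_of_forall_pos_le_add fun ε hε => ?_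
      have hmaps : Set.MapsTo g (Metric.ball (0:ℂ) 1) (Metric.ball (g 0) (1 + ε)) := by
        intro z hz
        rw [g0, mem_ball, dist_zero_right, Complex.norm_eq_abs]
        exact lt_of_le_of_lt (hgle z hz) (by linarith)
      simpa using Complex.abs_deriv_le_div_of_mapsTo_ball gdiff hmaps one_pos
    -- compute deriv g 0
    have hfd : HasDerivAt f (deriv f 0) 0 :=
      (fdiff.differentiableAt (isOpen_ball.mem_nhds h0mem)).hasDerivAt
    have hD0 : 1 - κ * f 0 ≠ 0 := hDne 0 h0mem
    have hgdv : HasDerivAt g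
        (deriv f 0 * (1 - κ * f 0)⁻¹ +
          (f 0 - f 0) * (-(-(κ * deriv f 0)) / (1 - κ * f 0) ^ 2)) 0 := by
      exact (hfd.sub_const (f 0)).mul (((hfd.const_mul κ).const_sub 1).inv hD0)
    have hder : deriv g 0 = deriv f 0 * (1 - κ * f 0)⁻¹ := by
      rw [hgdv.deriv]; ring
    have hnm : κ * f 0 = (normSq (f 0) : ℂ) := by
      rw [hκ, mul_comm, Complex.mul_conj]
    have hpos : (0:ℝ) < 1 - normSq (f 0) := by
      have : normSq (f 0) < 1 := by
        rw [← Complex.sq_abs]; nlinarith [Complex.abs.nonneg (f 0)]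
      linarith
    have habs2 : Complex.abs (deriv g 0) = Complex.abs (deriv f 0) / (1 - normSq (f 0)) := by
      rw [hder, hnm, map_mul, map_inv₀]
      congr 1
      rw [show (1:ℂ) - (normSq (f 0):ℂ) = ((1 - normSq (f 0) : ℝ) : ℂ) by push_cast; ring,
        Complex.abs_ofReal, _root_.abs_of_pos hpos]
    have final : Complex.abs (deriv f 0) ≤ 1 - normSq (f 0) := by
      rw [habs2] at hgd
      exact (div_le_one hpos).mp hgd
    rw [← d1, f0, Complex.sq_abs]
    exact final

lemma geom_aux (m : ℕ) (hm : 1 ≤ m) :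
    ∀ k : ℕ, ∑ j ∈ Finset.range m,
      ((Complex.exp ((2 * Real.pi / m : ℝ) * Complex.I)) ^ k) ^ j
      = if m ∣ k then (m:ℂ) else 0 := by
  set ω := Complex.exp ((2 * Real.pi / m : ℝ) * Complex.I) with hω
  have hm0 : (m:ℂ) ≠ 0 := Nat.cast_ne_zero.mpr (by omega)
  have hωm : ω ^ m = 1 := by
    rw [hω, ← Complex.exp_nat_mul]
    rw [show (m:ℂ) * ((2 * Real.pi / m : ℝ) * Complex.I) = 2 * Real.pi * Complex.I by
      push_cast; field_simp]
    exact Complex.exp_two_pi_mul_I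
  have hωpow : ∀ k, m ∣ k → ω ^ k = 1 := by
    rintro k ⟨t, rfl⟩
    rw [pow_mul, hωm, one_pow]
  have hωne : ∀ k, ¬ m ∣ k → ω ^ k ≠ 1 := by
    intro k hk he
    rw [hω, ← Complex.exp_nat_mul, Complex.exp_eq_one_iff] at he
    obtain ⟨t, ht⟩ := he
    push_cast at ht
    have hπ : (Real.pi : ℂ) ≠ 0 := Complex.ofReal_ne_zero.mpr Real.pi_ne_zero
    have hkm : (k:ℂ) = t * m := by
      field_simp at ht
      have h2 : (2 * (Real.pi:ℂ) * Complex.I) ≠ 0 := by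
        simp [Real.pi_ne_zero, Complex.I_ne_zero, hπ]
      apply mul_right_cancel₀ h2
      linear_combination (2 * (Real.pi:ℂ) * Complex.I) * ht
    have : (k:ℤ) = t * m := by exact_mod_cast hkm
    exact hk (Int.natCast_dvd_natCast.mp ⟨t, by rw [this]; ring⟩)
  intro k
  by_cases hd : m ∣ k
  · simp [hωpow k hd, Finset.sum_const, hd]
  · rw [if_neg hd, geom_sum_eq (hωne k hd)]
    have : (ω ^ k) ^ m = 1 := by rw [← pow_mul, mul_comm, pow_mul, hωm, one_pow]
    rw [this]; simp
lemma schwarz_pick_coeff (f : ℂ → ℂ) (q : FormalMultilinearSeries ℂ ℂ ℂ)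
    (hq : HasFPowerSeriesOnBall f q 0 1)
    (hb : ∀ z ∈ Metric.ball (0:ℂ) 1, Complex.abs (f z) ≤ 1)
    (m : ℕ) (hm : 1 ≤ m) :
    Complex.abs (q.coeff m) ≤ 1 - Complex.abs (q.coeff 0) ^ 2 := by
  set c := q.coeff with hc
  set ω := Complex.exp ((2 * Real.pi / m : ℝ) * Complex.I) with hω
  have habsω : Complex.abs ω = 1 := Complex.abs_exp_ofReal_mul_I _
  have hm0 : (m:ℂ) ≠ 0 := Nat.cast_ne_zero.mpr (by omega)
  have hcsum : ∀ z ∈ Metric.ball (0:ℂ) 1, HasSum (fun k => c k * z ^ k) (f z) := by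
    intro z hz
    have hz' : z ∈ Metric.eball (0:ℂ) 1 := by rwa [emetric_ball_one]
    have := hq.hasSum hz'
    rw [zero_add] at this
    simp only [FormalMultilinearSeries.apply_eq_pow_smul_coeff, smul_eq_mul] at this
    simpa [mul_comm] using this
  have key : ∀ w ∈ Metric.ball (0:ℂ) 1,
      ∃ S, HasSum (fun j => c (j*m) * w^j) S ∧ Complex.abs S ≤ 1 := by
    intro w hw
    obtain ⟨z, hzm⟩ : ∃ z : ℂ, z ^ m = w := by
      rcases IsAlgClosed.exists_pow_nat_eq w (n := m) (by omega) with ⟨z, hz⟩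
      exact ⟨z, hz⟩
    have hzb : z ∈ Metric.ball (0:ℂ) 1 := by
      rw [mem_ball, dist_zero_right, Complex.norm_eq_abs]
      by_contra hle
      push_neg at hle
      have h1 : (1:ℝ) ≤ Complex.abs z ^ m := by
        calc (1:ℝ) = 1 ^ m := (one_pow m).symm
        _ ≤ Complex.abs z ^ m := pow_le_pow_left₀ one_pos.le hle m
      have h2 : Complex.abs w < 1 := by
        rwa [mem_ball, dist_zero_right, Complex.norm_eq_abs] at hw
      rw [← hzm, map_pow] at h2
      linarith
    have hjb : ∀ j : ℕ, ω ^ j * z ∈ Metric.ball (0:ℂ) 1 := by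
      intro j
      rw [mem_ball, dist_zero_right, Complex.norm_eq_abs, map_mul, map_pow, habsω, one_pow,
        one_mul]
      rwa [mem_ball, dist_zero_right, Complex.norm_eq_abs] at hzb
    have Hsum : HasSum (fun k => ∑ j ∈ Finset.range m, c k * (ω ^ j * z) ^ k)
        (∑ j ∈ Finset.range m, f (ω ^ j * z)) :=
      hasSum_sum fun j _ => hcsum (ω ^ j * z) (hjb j)
    have heq : (fun k => ∑ j ∈ Finset.range m, c k * (ω ^ j * z) ^ k)
        = fun k => if m ∣ k then (m:ℂ) * (c k * z ^ k) else 0 := by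
      funext k
      have : ∑ j ∈ Finset.range m, c k * (ω ^ j * z) ^ k
          = (c k * z ^ k) * ∑ j ∈ Finset.range m, (ω ^ k) ^ j := by
        rw [Finset.mul_sum]
        refine Finset.sum_congr rfl fun j _ => ?_
        rw [mul_pow, ← pow_mul, ← pow_mul, mul_comm j k]
        ring
      rw [this, geom_aux m hm k]
      split <;> ring
    rw [heq] at Hsum
    have hinj : Function.Injective (fun j : ℕ => j * m) := fun x y hxy => by
      simpa using Nat.eq_of_mul_eq_mul_right (by omega) hxy
    have hvan : ∀ k, k ∉ Set.range (fun j : ℕ => j * m) →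
        (if m ∣ k then (m:ℂ) * (c k * z ^ k) else 0) = 0 := by
      intro k hk
      rw [if_neg]
      rintro ⟨j, rfl⟩
      exact hk ⟨j, mul_comm j m⟩
    have H3 := (Function.Injective.hasSum_iff hinj hvan).mpr Hsum
    have H4 := H3.mul_left (m:ℂ)⁻¹
    have hfun : (fun i => (m:ℂ)⁻¹ *
        ((fun k => if m ∣ k then (m:ℂ) * (c k * z ^ k) else 0) ∘ fun j => j * m) i)
        = fun j => c (j*m) * w^j := by
      funext j
      simp only [Function.comp_apply]
      rw [if_pos (dvd_mul_left m j), inv_mul_cancel_left₀ hm0, mul_comm j m, pow_mul, hzm]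
    rw [hfun] at H4
    refine ⟨_, H4, ?_⟩
    have hmpos : (0:ℝ) < m := by exact_mod_cast Nat.lt_of_lt_of_le Nat.zero_lt_one hm
    rw [map_mul, map_inv₀, Complex.abs_natCast]
    have hsum_le : Complex.abs (∑ j ∈ Finset.range m, f (ω ^ j * z)) ≤ m := by
      calc Complex.abs (∑ j ∈ Finset.range m, f (ω ^ j * z))
          ≤ ∑ j ∈ Finset.range m, Complex.abs (f (ω ^ j * z)) := Complex.abs.sum_le _ _
        _ ≤ ∑ _j ∈ Finset.range m, (1:ℝ) := Finset.sum_le_sum fun j _ => hb _ (hjb j)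
        _ = m := by simp
    rw [inv_mul_le_iff₀ hmpos, mul_one]
    exact hsum_le
  set G : ℂ → ℂ := fun w => ∑' j, c (j*m) * w^j with hG
  have hGsum : ∀ w ∈ Metric.ball (0:ℂ) 1, HasSum (fun j => c (j*m) * w^j) (G w) := by
    intro w hw
    obtain ⟨S, hS, -⟩ := key w hw
    exact hS.summable.hasSum
  have hGle : ∀ w ∈ Metric.ball (0:ℂ) 1, Complex.abs (G w) ≤ 1 := by
    intro w hw
    obtain ⟨S, hS, hSb⟩ := key w hw
    have : G w = S := hS.tsum_eq
    rwa [this]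
  have hfps := myHasFPS (fun k => c (k*m)) G hGsum
  have := schwarz_pick_coeff_one G _ hfps hGle
  rwa [myOfScalars_coeff, myOfScalars_coeff, one_mul, Nat.zero_mul] at this
lemma comp_coeff {F G : Type*} [NormedAddCommGroup F] [NormedSpace ℂ F]
    [NormedAddCommGroup G] [NormedSpace ℂ G]
    (T : F →L[ℂ] G) (p : FormalMultilinearSeries ℂ ℂ F) (k : ℕ) :
    (T.compFormalMultilinearSeries p).coeff k = T (p.coeff k) := by
  show (T.compFormalMultilinearSeries p) k (fun _ => (1:ℂ)) = T (p k fun _ => (1:ℂ))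
  rw [ContinuousLinearMap.compFormalMultilinearSeries_apply]
  rfl


lemma exists_unimodular (x y : ℂ) : ∃ l : ℂ, Complex.abs l = 1 ∧
    Complex.abs (x + l * y) = Complex.abs x + Complex.abs y := by
  by_cases hy : y = 0
  · exact ⟨1, by simp [hy]⟩
  by_cases hx : x = 0
  · exact ⟨1, by simp [hx]⟩
  have hax : Complex.abs x ≠ 0 := Complex.abs.ne_zero hx
  have hay : Complex.abs y ≠ 0 := Complex.abs.ne_zero hy
  have haxC : ((Complex.abs x : ℝ) : ℂ) ≠ 0 := by exact_mod_cast Complex.ofReal_ne_zero.mpr hax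
  have hayC : ((Complex.abs y : ℝ) : ℂ) ≠ 0 := by exact_mod_cast Complex.ofReal_ne_zero.mpr hay
  set l : ℂ := (x / (Complex.abs x : ℂ)) * (starRingEnd ℂ y / (Complex.abs y : ℂ)) with hl
  have h1 : Complex.abs l = 1 := by
    rw [hl, map_mul, map_div₀, map_div₀, Complex.abs_conj, Complex.abs_ofReal,
      Complex.abs_ofReal, _root_.abs_of_nonneg (Complex.abs.nonneg x),
      _root_.abs_of_nonneg (Complex.abs.nonneg y)]
    field_simp
  refine ⟨l, h1, ?_⟩
  have hcy : (starRingEnd ℂ y) * y = ((Complex.abs y : ℂ))^2 := by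
    rw [mul_comm, Complex.mul_conj, Complex.normSq_eq_abs]
    push_cast; ring
  have hxy : x + l * y = x * ((Complex.abs x : ℂ) + (Complex.abs y : ℂ)) / (Complex.abs x : ℂ) := by
    rw [hl]
    field_simp
    linear_combination hcy
  rw [hxy, map_div₀, map_mul,
    show ((Complex.abs x : ℂ) + (Complex.abs y : ℂ)) = (((Complex.abs x + Complex.abs y : ℝ)) : ℂ)
      by push_cast; ring,
    Complex.abs_ofReal, Complex.abs_ofReal,
    _root_.abs_of_nonneg (by positivity : (0:ℝ) ≤ Complex.abs x + Complex.abs y),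
    _root_.abs_of_nonneg (Complex.abs.nonneg x)]
  field_simp

theorem stmt_9 (h g : ℂ → ℂ) (a b : ℕ → ℂ) (Λ : ℝ)
    (hh : DifferentiableOn ℂ h (ball (0 : ℂ) 1))
    (hg : DifferentiableOn ℂ g (ball (0 : ℂ) 1))
    (ha0 : a 0 = 0) (hb0 : b 0 = 0)
    (hsa : ∀ z ∈ ball (0 : ℂ) 1, HasSum (fun n : ℕ => a n * z ^ n) (h z))
    (hsb : ∀ z ∈ ball (0 : ℂ) 1, HasSum (fun n : ℕ => b n * z ^ n) (g z))
    (h1 : 1 ≤ |‖a 1‖ - ‖b 1‖|)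
    (hΛ : 1 ≤ Λ)
    (hbd : ∀ z ∈ ball (0 : ℂ) 1,
      ‖deriv h z‖ + ‖deriv g z‖ ≤ Λ) :
    ∀ n : ℕ, 2 ≤ n →
      ‖a n‖ + ‖b n‖ ≤ (Λ ^ 2 - 1) / (n * Λ) := by
  simp only [Complex.norm_eq_abs] at h1 hbd ⊢
  intro n hn
  have hΛ0 : (0:ℝ) < Λ := lt_of_lt_of_le one_pos hΛ
  obtain ⟨lam, hlam1, hlamsum⟩ := exists_unimodular (a n) (b n)
  set cH : ℕ → ℂ := fun k => a k + lam * b k with hcH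
  set H : ℂ → ℂ := fun z => h z + lam * g z with hH
  have hsH : ∀ z ∈ ball (0:ℂ) 1, HasSum (fun k => cH k * z ^ k) (H z) := by
    intro z hz
    have := (hsa z hz).add ((hsb z hz).mul_left lam)
    simpa [hcH, hH, add_mul, mul_assoc] using this
  have hHfps := myHasFPS cH H hsH
  have hFd := hHfps.fderiv
  set L : (ℂ →L[ℂ] ℂ) →L[ℂ] ℂ := ContinuousLinearMap.apply ℂ ℂ (1:ℂ) with hL
  set qD := L.compFormalMultilinearSeries ((ofScalars ℂ cH).derivSeries) with hqD
  have hDH : HasFPowerSeriesOnBall (deriv H) qD 0 1 := by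
    refine (L.comp_hasFPowerSeriesOnBall hFd).congr fun z hz => ?_
    simp only [Function.comp_apply, hL, ContinuousLinearMap.apply_apply]
    exact fderiv_apply_one_eq_deriv
  have hcoeffD : ∀ k, qD.coeff k = ((k+1 : ℕ) : ℂ) * cH (k+1) := by
    intro k
    have hd := FormalMultilinearSeries.derivSeries_apply_diag (p := ofScalars ℂ cH) k (1:ℂ)
    calc qD.coeff k = L (((ofScalars ℂ cH).derivSeries).coeff k) := by
          rw [hqD, comp_coeff]
      _ = ((ofScalars ℂ cH).derivSeries k (fun _ => (1:ℂ))) 1 := by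
          rw [hL, ContinuousLinearMap.apply_apply]
          rfl
      _ = (k+1) • ((ofScalars ℂ cH) (k+1) fun _ => (1:ℂ)) := hd
      _ = ((k+1 : ℕ) : ℂ) * cH (k+1) := by
          rw [nsmul_eq_mul]
          congr 1
          exact myOfScalars_coeff cH (k+1)
  -- scaled function
  set L2 : ℂ →L[ℂ] ℂ := ((Λ:ℂ)⁻¹) • ContinuousLinearMap.id ℂ ℂ with hL2
  set q2 := L2.compFormalMultilinearSeries qD with hq2d
  have hq2 := L2.comp_hasFPowerSeriesOnBall hDH
  have hcoeff2 : ∀ k, q2.coeff k = (Λ:ℂ)⁻¹ * (((k+1 : ℕ) : ℂ) * cH (k+1)) := by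
    intro k
    calc q2.coeff k = L2 (qD.coeff k) := by rw [hq2d, comp_coeff]
      _ = (Λ:ℂ)⁻¹ * (qD.coeff k) := by
          rw [hL2]
          simp
      _ = _ := by rw [hcoeffD k]
  -- derivative bound
  have hderivH : ∀ z ∈ ball (0:ℂ) 1, deriv H z = deriv h z + lam * deriv g z := by
    intro z hz
    have hdh : DifferentiableAt ℂ h z := hh.differentiableAt (isOpen_ball.mem_nhds hz)
    have hdg : DifferentiableAt ℂ g z := hg.differentiableAt (isOpen_ball.mem_nhds hz)
    rw [hH]
    exact (hdh.hasDerivAt.add (hdg.hasDerivAt.const_mul lam)).deriv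
  have hb2 : ∀ z ∈ ball (0:ℂ) 1, Complex.abs ((L2 ∘ deriv H) z) ≤ 1 := by
    intro z hz
    have hdb : Complex.abs (deriv H z) ≤ Λ := by
      rw [hderivH z hz]
      calc Complex.abs (deriv h z + lam * deriv g z)
          ≤ Complex.abs (deriv h z) + Complex.abs (lam * deriv g z) := Complex.abs.add_le _ _
        _ = Complex.abs (deriv h z) + Complex.abs (deriv g z) := by rw [map_mul, hlam1, one_mul]
        _ ≤ Λ := hbd z hz
    have : (L2 ∘ deriv H) z = (Λ:ℂ)⁻¹ * deriv H z := by simp [hL2]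
    rw [this, map_mul, map_inv₀, Complex.abs_ofReal, _root_.abs_of_pos hΛ0,
      inv_mul_le_iff₀ hΛ0, mul_one]
    exact hdb
  -- apply the key lemma
  have key := schwarz_pick_coeff _ _ hq2 hb2 (n-1) (by omega)
  rw [hcoeff2, hcoeff2] at key
  have hn1 : (n-1) + 1 = n := by omega
  rw [hn1] at key
  -- coefficient 0 lower bound
  have hc1 : 1 ≤ Complex.abs (cH 1) := by
    have hle := abs_norm_sub_norm_le (a 1) (-(lam * b 1))
    rw [sub_neg_eq_add, norm_neg] at hle
    have : ‖lam * b 1‖ = Complex.abs (b 1) := by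
      rw [Complex.norm_eq_abs, map_mul, hlam1, one_mul]
    rw [this, Complex.norm_eq_abs, Complex.norm_eq_abs] at hle
    calc (1:ℝ) ≤ |Complex.abs (a 1) - Complex.abs (b 1)| := h1
      _ ≤ Complex.abs (a 1 + lam * b 1) := hle
      _ = Complex.abs (cH 1) := rfl
  -- compute abs of the two coefficients
  have habs_n : Complex.abs ((Λ:ℂ)⁻¹ * (((n : ℕ) : ℂ) * cH n))
      = Λ⁻¹ * (n * (Complex.abs (a n) + Complex.abs (b n))) := by
    rw [map_mul, map_mul, map_inv₀, Complex.abs_ofReal, _root_.abs_of_pos hΛ0,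
      Complex.abs_natCast, hlamsum]
  rw [habs_n] at key
  have habs_0 : Λ⁻¹ ≤ Complex.abs ((Λ:ℂ)⁻¹ * (((0+1 : ℕ) : ℂ) * cH (0+1))) := by
    rw [map_mul, map_mul, map_inv₀, Complex.abs_ofReal, _root_.abs_of_pos hΛ0]
    norm_num
    calc Λ⁻¹ = Λ⁻¹ * 1 := (mul_one _).symm
      _ ≤ Λ⁻¹ * Complex.abs (cH 1) := by
          apply mul_le_mul_of_nonneg_left hc1 (by positivity)
  have hup : 1 - Complex.abs ((Λ:ℂ)⁻¹ * (((0+1 : ℕ) : ℂ) * cH (0+1))) ^ 2 ≤ 1 - (Λ⁻¹)^2 := by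
    have h0 : (0:ℝ) ≤ Λ⁻¹ := by positivity
    nlinarith [habs_0, Complex.abs.nonneg ((Λ:ℂ)⁻¹ * (((0+1 : ℕ) : ℂ) * cH (0+1)))]
  have hfinal : Λ⁻¹ * (n * (Complex.abs (a n) + Complex.abs (b n))) ≤ 1 - (Λ⁻¹)^2 :=
    le_trans key hup
  have hnpos : (0:ℝ) < n := by exact_mod_cast Nat.lt_of_lt_of_le Nat.zero_lt_one (by omega)
  rw [le_div_iff₀ (by positivity)]
  have hinv : Λ * Λ⁻¹ = 1 := mul_inv_cancel₀ (ne_of_gt hΛ0)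
  nlinarith [mul_le_mul_of_nonneg_left hfinal (le_of_lt (mul_pos hΛ0 hΛ0)),
    Complex.abs.nonneg (a n), Complex.abs.nonneg (b n)]
end

section
/- Suppose M > 1, ρ₀ = M − √(M²−1), and h, g are holomorphic on the unit disk with h(0) = g(0) = 0, ||h'(0)| − |g'(0)|| = 1, and |h'(z) − h'(0)| + |g'(z) − g'(0)| ≤ (M²−1)(2M|z| − |z|²)/(M − |z|)² for all |z| < ρ₀. Then for every unimodular complex λ, the function f_λ = h + λ g is injective on the disk {|z| < ρ₀}. -/
open Metric Complex


private lemma stmt15_mono (M a b : ℝ) (hM : 1 < M) (ha : 0 ≤ a) (hab : a ≤ b) (hb : b < M) :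
    (M ^ 2 - 1) * (2 * M * a - a ^ 2) / (M - a) ^ 2 ≤
    (M ^ 2 - 1) * (2 * M * b - b ^ 2) / (M - b) ^ 2 := by
  have h1 : (0:ℝ) < (M - a) ^ 2 := by nlinarith
  have h2 : (0:ℝ) < (M - b) ^ 2 := by nlinarith
  rw [div_le_div_iff₀ h1 h2]
  nlinarith [mul_nonneg (mul_nonneg (mul_nonneg (by nlinarith : (0:ℝ) ≤ M^2 - 1) (sq_nonneg M)) (sub_nonneg.2 hab)) (by linarith : (0:ℝ) ≤ 2*M - a - b)]

private lemma stmt15_lt_one (M r s : ℝ) (hM : 1 < M) (hr : 0 ≤ r) (hs : 0 ≤ s)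
    (hs2 : s^2 = M^2-1) (hrρ : r < M - s) :
    (M ^ 2 - 1) * (2 * M * r - r ^ 2) / (M - r) ^ 2 < 1 := by
  have h1 : (0:ℝ) < (M - r) ^ 2 := by nlinarith
  rw [div_lt_one h1]
  nlinarith [mul_pos (by linarith : (0:ℝ) < M - s - r) (by nlinarith : (0:ℝ) < M + s - r)]

theorem stmt_15 (M : ℝ) (hM : 1 < M) (h g : ℂ → ℂ)
    (hh : DifferentiableOn ℂ h (ball (0 : ℂ) 1))
    (hg : DifferentiableOn ℂ g (ball (0 : ℂ) 1))
    (h0 : h 0 = 0) (g0 : g 0 = 0)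
    (hlam0 : |‖deriv h 0‖ - ‖deriv g 0‖| = 1)
    (hbd : ∀ z : ℂ, ‖z‖ < M - Real.sqrt (M ^ 2 - 1) →
      ‖deriv h z - deriv h 0‖ + ‖deriv g z - deriv g 0‖ ≤
        (M ^ 2 - 1) * (2 * M * ‖z‖ - (‖z‖) ^ 2) /
          (M - ‖z‖) ^ 2) :
    ∀ lam : ℂ, ‖lam‖ = 1 →
      Set.InjOn (fun z => h z + lam * g z)
        (ball (0 : ℂ) (M - Real.sqrt (M ^ 2 - 1))) := by
  intro lam hlam z₁ hz₁ z₂ hz₂ hfz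
  set ρ : ℝ := M - Real.sqrt (M ^ 2 - 1) with hρdef
  have hM0 : (0:ℝ) < M := by linarith
  have hs0 : 0 ≤ Real.sqrt (M ^ 2 - 1) := Real.sqrt_nonneg _
  have hs2 : Real.sqrt (M ^ 2 - 1) ^ 2 = M ^ 2 - 1 := Real.sq_sqrt (by nlinarith)
  have hρ0 : 0 < ρ := by nlinarith [sq_nonneg (Real.sqrt (M ^ 2 - 1) - M)]
  have hρ1 : ρ < 1 := by nlinarith [sq_nonneg (Real.sqrt (M ^ 2 - 1) - (M - 1))]
  rw [mem_ball_zero_iff] at hz₁ hz₂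
  set r : ℝ := max ‖z₁‖ ‖z₂‖ with hrdef
  have hr0 : 0 ≤ r := le_trans (norm_nonneg z₁) (le_max_left _ _)
  have hrρ : r < ρ := by
    simp only [hrdef, max_lt_iff]
    exact ⟨by simpa using hz₁, by simpa using hz₂⟩
  have hrM : r < M := by linarith
  set d : ℂ → ℂ := fun x => deriv h x + lam * deriv g x with hddef
  -- derivative facts
  have hderiv : ∀ x ∈ closedBall (0:ℂ) r,
      HasFDerivWithinAt (fun z => h z + lam * g z)
        (ContinuousLinearMap.smulRight (1 : ℂ →L[ℂ] ℂ) (d x)) (closedBall (0:ℂ) r) x := by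
    intro x hx
    have hx1 : x ∈ ball (0:ℂ) 1 := by
      rw [mem_closedBall_zero_iff] at hx
      rw [mem_ball_zero_iff]
      calc ‖x‖ ≤ r := hx
        _ < 1 := lt_trans hrρ hρ1
    have hhx : DifferentiableAt ℂ h x := hh.differentiableAt (isOpen_ball.mem_nhds hx1)
    have hgx : DifferentiableAt ℂ g x := hg.differentiableAt (isOpen_ball.mem_nhds hx1)
    exact ((hhx.hasDerivAt.add (hgx.hasDerivAt.const_mul lam)).hasDerivWithinAt).hasFDerivWithinAt
  -- the constant
  set C : ℝ := (M ^ 2 - 1) * (2 * M * r - r ^ 2) / (M - r) ^ 2 with hCdef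
  have hC1 : C < 1 :=
    stmt15_lt_one M r (Real.sqrt (M ^ 2 - 1)) hM hr0 hs0 hs2 (by rw [hρdef] at hrρ; exact hrρ)
  -- bound on the derivative deviation
  have hbound : ∀ x ∈ closedBall (0:ℂ) r,
      ‖ContinuousLinearMap.smulRight (1 : ℂ →L[ℂ] ℂ) (d x)
        - ContinuousLinearMap.smulRight (1 : ℂ →L[ℂ] ℂ) (d 0)‖ ≤ C := by
    intro x hx
    rw [mem_closedBall_zero_iff] at hx
    have hkey : ContinuousLinearMap.smulRight (1 : ℂ →L[ℂ] ℂ) (d x)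
        - ContinuousLinearMap.smulRight (1 : ℂ →L[ℂ] ℂ) (d 0)
        = ContinuousLinearMap.smulRight (1 : ℂ →L[ℂ] ℂ) (d x - d 0) := by
      ext y; simp [smul_sub]
    rw [hkey, ContinuousLinearMap.norm_smulRight_apply, ContinuousLinearMap.one_def,
      ContinuousLinearMap.norm_id, one_mul]
    have habs : ‖x‖ < ρ := by
      linarith
    have h1 : ‖d x - d 0‖ ≤ ‖deriv h x - deriv h 0‖
        + ‖deriv g x - deriv g 0‖ := by
      have : d x - d 0 = (deriv h x - deriv h 0) + lam * (deriv g x - deriv g 0) := by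
        simp only [hddef]; ring
      rw [this]
      calc ‖(deriv h x - deriv h 0) + lam * (deriv g x - deriv g 0)‖
          ≤ ‖deriv h x - deriv h 0‖ + ‖lam * (deriv g x - deriv g 0)‖ :=
            norm_add_le _ _
        _ = ‖deriv h x - deriv h 0‖ + ‖deriv g x - deriv g 0‖ := by
            rw [norm_mul, hlam, one_mul]
    have h2 := hbd x habs
    have h3 : (M ^ 2 - 1) * (2 * M * ‖x‖ - (‖x‖) ^ 2) /
        (M - ‖x‖) ^ 2 ≤ C :=
      stmt15_mono M (‖x‖) r hM (norm_nonneg x)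
        (by exact hx) hrM
    linarith
  -- mean value inequality
  have hz₁' : z₁ ∈ closedBall (0:ℂ) r := by
    rw [mem_closedBall_zero_iff]; exact le_max_left _ _
  have hz₂' : z₂ ∈ closedBall (0:ℂ) r := by
    rw [mem_closedBall_zero_iff]; exact le_max_right _ _
  have hmvt := (convex_closedBall (0:ℂ) r).norm_image_sub_le_of_norm_hasFDerivWithin_le'
    hderiv hbound hz₁' hz₂'
  have hfz' : h z₁ + lam * g z₁ = h z₂ + lam * g z₂ := hfz
  rw [← hfz', sub_self] at hmvt
  rw [zero_sub, norm_neg] at hmvt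
  rw [ContinuousLinearMap.smulRight_apply, ContinuousLinearMap.one_apply, smul_eq_mul,
    norm_mul] at hmvt
  -- lower bound on |d 0|
  have hd0 : 1 ≤ ‖d 0‖ := by
    have := abs_norm_sub_norm_le (deriv h 0) (-(lam * deriv g 0))
    have hng : ‖-(lam * deriv g 0)‖ = ‖deriv g 0‖ := by
      rw [norm_neg, norm_mul, hlam, one_mul]
    rw [hng, sub_neg_eq_add] at this
    calc (1:ℝ) = |‖deriv h 0‖ - ‖deriv g 0‖| := hlam0.symm
      _ = |‖deriv h 0‖ - ‖deriv g 0‖| := rfl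
      _ ≤ ‖deriv h 0 + lam * deriv g 0‖ := this
      _ = ‖d 0‖ := rfl
  -- conclude
  by_contra hne
  have hpos : 0 < ‖z₂ - z₁‖ := by
    rw [norm_pos_iff, sub_ne_zero]
    exact fun e => hne e.symm
  have : ‖z₂ - z₁‖ * ‖d 0‖ ≤ C * ‖z₂ - z₁‖ := hmvt
  nlinarith
end

section
/- Suppose M > 1, ρ₀ = M − √(M²−1), and h, g are holomorphic on the unit disk with h(0) = g(0) = 0, ||h'(0)| − |g'(0)|| = 1, and |h'(z) − h'(0)| + |g'(z) − g'(0)| ≤ (M²−1)(2M|z| − |z|²)/(M−|z|)² for |z| < ρ₀. Then for every unimodular λ and every z' with |z'| = ρ₀ (taking radial limits / continuity), |h(z') + λ g(z')| ≥ M ρ₀². -/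
open Metric Complex intervalIntegral MeasureTheory

lemma intB_aux (M r : ℝ) (hr : 0 ≤ r) (hrM : r < M) :
    ∫ t in (0:ℝ)..1, (M ^ 2 - 1) * (2 * M * (t * r) - (t * r) ^ 2) / (M - t * r) ^ 2 * r
      = (M ^ 2 - 1) * r ^ 2 / (M - r) := by
  have hne : ∀ t ∈ Set.uIcc (0:ℝ) 1, M - t * r ≠ 0 := by
    intro t ht
    rw [Set.uIcc_of_le (by norm_num)] at ht
    have : t * r ≤ r := mul_le_of_le_one_left hr ht.2
    have : t * r ≥ 0 := mul_nonneg ht.1 hr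
    nlinarith
  have key : ∀ t ∈ Set.uIcc (0:ℝ) 1,
      HasDerivAt (fun t => (M ^ 2 - 1) * (t * r) ^ 2 / (M - t * r))
        ((M ^ 2 - 1) * (2 * M * (t * r) - (t * r) ^ 2) / (M - t * r) ^ 2 * r) t := by
    intro t ht
    have h1 : HasDerivAt (fun t : ℝ => (M ^ 2 - 1) * (t * r) ^ 2)
        ((M ^ 2 - 1) * (2 * (t * r) ^ 1 * r)) t := by
      have := (((hasDerivAt_id t).mul_const r).pow 2).const_mul (M ^ 2 - 1)
      exact this.congr_deriv (by norm_num [id])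
    have h2 : HasDerivAt (fun t : ℝ => M - t * r) (-r) t := by
      simpa using ((hasDerivAt_id t).mul_const r).const_sub M
    have h3 := h1.div h2 (hne t ht)
    refine h3.congr_deriv ?_
    have hMt := hne t ht
    field_simp
    ring
  have hcont : ContinuousOn
      (fun t => (M ^ 2 - 1) * (2 * M * (t * r) - (t * r) ^ 2) / (M - t * r) ^ 2 * r)
      (Set.uIcc (0:ℝ) 1) := by
    apply ContinuousOn.mul _ continuousOn_const
    apply ContinuousOn.div (by fun_prop) (by fun_prop)
    intro t ht
    exact pow_ne_zero 2 (hne t ht)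
  have := integral_eq_sub_of_hasDerivAt key (hcont.intervalIntegrable)
  rw [this]
  norm_num

theorem stmt_16 (M : ℝ) (hM : 1 < M) (h g : ℂ → ℂ)
    (hh : DifferentiableOn ℂ h (ball (0 : ℂ) 1))
    (hg : DifferentiableOn ℂ g (ball (0 : ℂ) 1))
    (h0 : h 0 = 0) (g0 : g 0 = 0)
    (hlam0 : |‖deriv h 0‖ - ‖deriv g 0‖| = 1)
    (hbd : ∀ z : ℂ, ‖z‖ < M - Real.sqrt (M ^ 2 - 1) →
      ‖deriv h z - deriv h 0‖ + ‖deriv g z - deriv g 0‖ ≤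
        (M ^ 2 - 1) * (2 * M * ‖z‖ - (‖z‖) ^ 2) /
          (M - ‖z‖) ^ 2) :
    ∀ lam : ℂ, ‖lam‖ = 1 →
      ∀ z' : ℂ, ‖z'‖ = M - Real.sqrt (M ^ 2 - 1) →
        M * (M - Real.sqrt (M ^ 2 - 1)) ^ 2 ≤ ‖h z' + lam * g z'‖ := by
  intro lam hlam z' hz'
  set s : ℝ := Real.sqrt (M ^ 2 - 1) with hs_def
  set r : ℝ := M - s with hr_def
  have hM2 : (0:ℝ) < M ^ 2 - 1 := by nlinarith
  have hs2 : s ^ 2 = M ^ 2 - 1 := Real.sq_sqrt hM2.le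
  have hspos : 0 < s := Real.sqrt_pos.mpr hM2
  have hsM : s < M := by nlinarith
  have hrpos : 0 < r := by simp [hr_def]; linarith
  have hr1 : r < 1 := by nlinarith
  -- the function F
  set F : ℂ → ℂ := fun z => h z + lam * g z with hF_def
  have hF : DifferentiableOn ℂ F (ball (0:ℂ) 1) := hh.add (hg.const_mul lam)
  have hFat : ∀ z ∈ ball (0:ℂ) 1, DifferentiableAt ℂ F z := fun z hz =>
    hF.differentiableAt (isOpen_ball.mem_nhds hz)
  have hmem : ∀ t : ℝ, t ∈ Set.Icc (0:ℝ) 1 → (t:ℂ) * z' ∈ ball (0:ℂ) 1 := by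
    intro t ht
    simp only [mem_ball, dist_zero_right, norm_mul, Complex.norm_real, Real.norm_eq_abs, hz']
    rw [_root_.abs_of_nonneg ht.1]
    calc t * r ≤ 1 * r := by nlinarith [ht.2, hrpos]
    _ < 1 := by linarith
  have h0mem : (0:ℂ) ∈ ball (0:ℂ) 1 := by simp
  have hderivF : ∀ z ∈ ball (0:ℂ) 1, deriv F z = deriv h z + lam * deriv g z := by
    intro z hz
    have hha := hh.differentiableAt (isOpen_ball.mem_nhds hz)
    have hga := hg.differentiableAt (isOpen_ball.mem_nhds hz)
    rw [hF_def, deriv_fun_add hha (hga.const_mul lam), deriv_const_mul lam hga]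
  -- continuity of deriv F on ball
  have hcontD : ContinuousOn (deriv F) (ball (0:ℂ) 1) :=
    ((hF.analyticOnNhd isOpen_ball).deriv).continuousOn
  -- FTC
  have hderφ : ∀ t ∈ Set.uIcc (0:ℝ) 1,
      HasDerivAt (fun t : ℝ => F ((t:ℂ) * z')) (deriv F ((t:ℂ) * z') * z') t := by
    intro t ht
    rw [Set.uIcc_of_le (by norm_num)] at ht
    have h1 : HasDerivAt F (deriv F ((t:ℂ) * z')) ((t:ℂ) * z') :=
      (hFat _ (hmem t ht)).hasDerivAt
    have h2 : HasDerivAt (fun w : ℂ => w * z') z' (t:ℂ) := hasDerivAt_mul_const z'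
    exact (h1.comp (t:ℂ) h2).comp_ofReal
  have hcontf : ContinuousOn (fun t : ℝ => deriv F ((t:ℂ) * z') * z') (Set.uIcc (0:ℝ) 1) := by
    rw [Set.uIcc_of_le (by norm_num)]
    apply ContinuousOn.mul _ continuousOn_const
    exact hcontD.comp (by fun_prop) hmem
  have hintf : IntervalIntegrable (fun t : ℝ => deriv F ((t:ℂ) * z') * z') volume 0 1 :=
    hcontf.intervalIntegrable
  have hFTC := integral_eq_sub_of_hasDerivAt hderφ hintf
  simp only [Complex.ofReal_one, Complex.ofReal_zero, one_mul, zero_mul] at hFTC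
  have hF0 : F 0 = 0 := by simp [hF_def, h0, g0]
  rw [hF0, sub_zero] at hFTC
  -- split integral
  set c : ℂ := deriv F 0 * z' with hc_def
  have hsplit : F z' = c + ∫ t in (0:ℝ)..1, (deriv F ((t:ℂ) * z') * z' - c) := by
    rw [intervalIntegral.integral_sub hintf intervalIntegrable_const, hFTC]
    simp
  -- bound the error integral
  have hBcont : ContinuousOn
      (fun t : ℝ => (M ^ 2 - 1) * (2 * M * (t * r) - (t * r) ^ 2) / (M - t * r) ^ 2 * r)
      (Set.uIcc (0:ℝ) 1) := by
    apply ContinuousOn.mul _ continuousOn_const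
    apply ContinuousOn.div (by fun_prop) (by fun_prop)
    intro t ht
    rw [Set.uIcc_of_le (by norm_num)] at ht
    have h1 : t * r ≤ r := mul_le_of_le_one_left hrpos.le ht.2
    have h2 : 0 < M - t * r := by nlinarith
    positivity
  have habs : ∀ t : ℝ, ‖(t:ℂ) * z'‖ = |t| * r := by
    intro t; simp [hz']
  have hbound : ∀ t ∈ Set.Icc (0:ℝ) 1, t ≠ 1 →
      ‖deriv F ((t:ℂ) * z') * z' - c‖ ≤
        (M ^ 2 - 1) * (2 * M * (t * r) - (t * r) ^ 2) / (M - t * r) ^ 2 * r := by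
    intro t ht hne
    have htr : ‖(t:ℂ) * z'‖ = t * r := by rw [habs, _root_.abs_of_nonneg ht.1]
    have htlt : t < 1 := lt_of_le_of_ne ht.2 hne
    have hltr : ‖(t:ℂ) * z'‖ < r := by rw [htr]; nlinarith [ht.1]
    have hbd' := hbd _ hltr
    rw [htr] at hbd'
    have hD1 := hderivF _ (hmem t ht)
    have hD0 := hderivF _ h0mem
    have heq : deriv F ((t:ℂ) * z') * z' - c =
        ((deriv h ((t:ℂ) * z') - deriv h 0) + lam * (deriv g ((t:ℂ) * z') - deriv g 0)) * z' := by
      rw [hc_def, hD1, hD0]; ring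
    rw [heq, norm_mul, hz']
    have : ‖(deriv h ((t:ℂ) * z') - deriv h 0) +
        lam * (deriv g ((t:ℂ) * z') - deriv g 0)‖ ≤
        (M ^ 2 - 1) * (2 * M * (t * r) - (t * r) ^ 2) / (M - t * r) ^ 2 := by
      calc _ ≤ ‖deriv h ((t:ℂ) * z') - deriv h 0‖ +
          ‖lam * (deriv g ((t:ℂ) * z') - deriv g 0)‖ := norm_add_le _ _
      _ = ‖deriv h ((t:ℂ) * z') - deriv h 0‖ +
          ‖deriv g ((t:ℂ) * z') - deriv g 0‖ := by rw [norm_mul, hlam, one_mul]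
      _ ≤ _ := hbd'
    exact mul_le_mul_of_nonneg_right this hrpos.le
  have hnormint : IntervalIntegrable
      (fun t : ℝ => ‖deriv F ((t:ℂ) * z') * z' - c‖) volume 0 1 := by
    apply ContinuousOn.intervalIntegrable
    exact (continuous_norm.comp_continuousOn (hcontf.sub continuousOn_const))
  have herr : ‖∫ t in (0:ℝ)..1, (deriv F ((t:ℂ) * z') * z' - c)‖ ≤
      (M ^ 2 - 1) * r ^ 2 / (M - r) := by
    calc ‖∫ t in (0:ℝ)..1, (deriv F ((t:ℂ) * z') * z' - c)‖
        ≤ ∫ t in (0:ℝ)..1, ‖deriv F ((t:ℂ) * z') * z' - c‖ := by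
          simpa using
            intervalIntegral.norm_integral_le_integral_norm (μ := volume)
              (f := fun t : ℝ => deriv F ((t:ℂ) * z') * z' - c) (by norm_num : (0:ℝ) ≤ 1)
      _ ≤ ∫ t in (0:ℝ)..1,
          (M ^ 2 - 1) * (2 * M * (t * r) - (t * r) ^ 2) / (M - t * r) ^ 2 * r := by
          apply intervalIntegral.integral_mono_ae_restrict (by norm_num) hnormint
            hBcont.intervalIntegrable
          have h1 : ∀ᵐ t : ℝ ∂volume, t ≠ 1 := by
            rw [MeasureTheory.ae_iff]
            simpa using Real.volume_singleton
          filter_upwards [MeasureTheory.ae_restrict_mem measurableSet_Icc,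
            MeasureTheory.ae_restrict_of_ae h1] with t ht hne
          exact hbound t ht hne
      _ = (M ^ 2 - 1) * r ^ 2 / (M - r) := intB_aux M r hrpos.le (by linarith)
  -- |deriv F 0| ≥ 1
  have hD0 : deriv F 0 = deriv h 0 + lam * deriv g 0 := hderivF _ h0mem
  have hA : 1 ≤ ‖deriv F 0‖ := by
    rw [hD0]
    calc (1:ℝ) = |‖deriv h 0‖ - ‖lam * deriv g 0‖| := by
          rw [norm_mul, hlam, one_mul, hlam0]
      _ ≤ ‖deriv h 0 - (-(lam * deriv g 0))‖ := by
          simpa using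
            abs_norm_sub_norm_le (deriv h 0) (-(lam * deriv g 0))
      _ = ‖deriv h 0 + lam * deriv g 0‖ := by ring_nf
  -- put together
  have hcabs : ‖c‖ = ‖deriv F 0‖ * r := by
    rw [hc_def, norm_mul, hz']
  have hfinal : ‖F z'‖ ≥ ‖c‖ -
      ‖∫ t in (0:ℝ)..1, (deriv F ((t:ℂ) * z') * z' - c)‖ := by
    rw [hsplit]
    have := norm_add_le (c + ∫ t in (0:ℝ)..1, (deriv F ((t:ℂ) * z') * z' - c))
      (-(∫ t in (0:ℝ)..1, (deriv F ((t:ℂ) * z') * z' - c)))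
    simp only [add_neg_cancel_right, norm_neg] at this
    linarith
  have hs_eq : (M ^ 2 - 1) * r ^ 2 / (M - r) = s * r ^ 2 := by
    rw [hr_def]
    have : M - (M - s) = s := by ring
    rw [this, ← hs2]
    field_simp
  have hgoal : M * r ^ 2 ≤ ‖F z'‖ := by
    have h1 : ‖c‖ ≥ 1 * r := by
      rw [hcabs]; exact mul_le_mul_of_nonneg_right hA hrpos.le
    rw [hs_eq] at herr
    have h2 : ‖F z'‖ ≥ r - s * r ^ 2 := by linarith
    have h3 : r - s * r ^ 2 = M * r ^ 2 := by
      have hkey : r * (s + M) = 1 := by rw [hr_def]; linear_combination -hs2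
      linear_combination (-r) * hkey
    linarith
  simpa [hF_def] using hgoal
end
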